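/- In a dagger category, if d : A ⟶ A is a Drazin inverse of f ≫ f† for a map f : A ⟶ B, then f† ≫ d : B ⟶ A is a †-Drazin inverse of f. Dually, if e : B ⟶ B is a Drazin inverse of f† ≫ f, then e ≫ f† : B ⟶ A is a †-Drazin inverse of f (so the †-Drazin inverse of f equals both f† ≫ (f ≫ f†)ᴰ and (f† ≫ f)ᴰ ≫ f†). -/
import Mathlib


open CategoryTheory

universe v u

/-- A dagger on a category: an identity-on-objects contravariant involution. -/
structure Dagger (C : Type u) [Category.{v} C] where
  dag : ∀ {X Y : C}, (X ⟶ Y) → (Y ⟶ X)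
  dag_id : ∀ X : C, dag (𝟙 X) = 𝟙 X
  dag_comp : ∀ {X Y Z : C} (f : X ⟶ Y) (g : Y ⟶ Z), dag (f ≫ g) = dag g ≫ dag f
  dag_dag : ∀ {X Y : C} (f : X ⟶ Y), dag (dag f) = f

/-- Iterated composition power of an endomorphism, with `cpow x 0 = 𝟙 A`. -/
def cpow {C : Type u} [Category.{v} C] {A : C} (x : A ⟶ A) : ℕ → (A ⟶ A)
  | 0 => 𝟙 A
  | n + 1 => cpow x n ≫ x

/-- `p` is a †-Drazin inverse of `f`. -/
def IsDagDrazinInv {C : Type u} [Category.{v} C] (D : Dagger C)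
    {A B : C} (f : A ⟶ B) (p : B ⟶ A) : Prop :=
  (∃ k : ℕ, cpow (f ≫ D.dag f) k ≫ f ≫ p = cpow (f ≫ D.dag f) k ∧
    p ≫ f ≫ cpow (D.dag f ≫ f) k = cpow (D.dag f ≫ f) k) ∧
  p ≫ f ≫ p = p ∧
  D.dag (f ≫ p) = f ≫ p ∧
  D.dag (p ≫ f) = p ≫ f

/-- `d` is a Drazin inverse of the endomorphism `x`. -/
def IsDrazinInv {C : Type u} [Category.{v} C] {A : C} (x d : A ⟶ A) : Prop :=
  (∃ k : ℕ, cpow x (k + 1) ≫ d = cpow x k) ∧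
  d ≫ x ≫ d = d ∧
  x ≫ d = d ≫ x

section
variable {C : Type u} [Category.{v} C] {A B : C}

lemma cpow_zero (x : A ⟶ A) : cpow x 0 = 𝟙 A := rfl
lemma cpow_succ (x : A ⟶ A) (n : ℕ) : cpow x (n+1) = cpow x n ≫ x := rfl

lemma cpow_succ' (x : A ⟶ A) (n : ℕ) : cpow x (n+1) = x ≫ cpow x n := by
  induction n with
  | zero => simp [cpow]
  | succ n ih => rw [cpow_succ x (n+1), ih, Category.assoc, ← cpow_succ, ih]

lemma cpow_comm {x d : A ⟶ A} (h : x ≫ d = d ≫ x) :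
    ∀ n, cpow x n ≫ d = d ≫ cpow x n
  | 0 => by simp [cpow]
  | n+1 => by
      rw [cpow_succ, Category.assoc, h, ← Category.assoc, cpow_comm h n,
        Category.assoc, ← cpow_succ]

lemma cpow_mul {x d : A ⟶ A} (h : x ≫ d = d ≫ x) :
    ∀ n, cpow (x ≫ d) n = cpow x n ≫ cpow d n
  | 0 => by simp [cpow]
  | n+1 => by
      have hc : d ≫ cpow x n = cpow x n ≫ d := (cpow_comm h n).symm
      rw [cpow_succ, cpow_mul h n, cpow_succ x n, cpow_succ d n]
      have : cpow d n ≫ x = x ≫ cpow d n := cpow_comm h.symm n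
      simp only [Category.assoc]
      rw [← Category.assoc (cpow d n) x d, this, Category.assoc]

lemma cpow_shift (f : A ⟶ B) (u : B ⟶ A) :
    ∀ n, f ≫ cpow (u ≫ f) n = cpow (f ≫ u) n ≫ f
  | 0 => by simp [cpow]
  | n+1 => by
      rw [cpow_succ, cpow_succ, ← Category.assoc, cpow_shift f u n]
      simp only [Category.assoc]

lemma cpow_idem {e : A ⟶ A} (he : e ≫ e = e) : ∀ n, cpow e (n+1) = e
  | 0 => by simp [cpow]
  | n+1 => by rw [cpow_succ, cpow_idem he n, he]

lemma cpow_absorb_right {x d : A ⟶ A} (hdd : d ≫ x ≫ d = d) :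
    ∀ n, d ≫ cpow (x ≫ d) n = d
  | 0 => by simp [cpow]
  | n+1 => by
      rw [cpow_succ, ← Category.assoc, cpow_absorb_right hdd n]
      exact hdd

lemma cpow_absorb_left {x d : A ⟶ A} (hdd : d ≫ x ≫ d = d) :
    ∀ n, cpow (d ≫ x) n ≫ d = d
  | 0 => by simp [cpow]
  | n+1 => by
      rw [cpow_succ', Category.assoc, cpow_absorb_left hdd n, Category.assoc]
      exact hdd

lemma cpow_ext {x d : A ⟶ A} {k : ℕ} (h : cpow x (k+1) ≫ d = cpow x k) :
    ∀ n, k ≤ n → cpow x (n+1) ≫ d = cpow x n := by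
  have key : ∀ j, cpow x (k+j+1) ≫ d = cpow x (k+j) := by
    intro j
    induction j with
    | zero => simpa using h
    | succ j ih =>
        have : cpow x (k+(j+1)+1) = x ≫ cpow x (k+j+1) := by
          rw [← cpow_succ']; ring_nf
        rw [this, Category.assoc, ih, ← cpow_succ']
        ring_nf
  intro n hn
  obtain ⟨j, rfl⟩ := Nat.exists_eq_add_of_le hn
  exact key j

lemma drazin_unique {x d d' : A ⟶ A} (hd : IsDrazinInv x d) (hd' : IsDrazinInv x d') :
    d = d' := by
  obtain ⟨⟨k, hk⟩, hdd, hc⟩ := hd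
  obtain ⟨⟨k', hk'⟩, hdd', hc'⟩ := hd'
  set n := max k k' with hn
  have hxn : cpow x (n+1) ≫ d = cpow x n := cpow_ext hk n (le_max_left _ _)
  have hxn' : cpow x (n+1) ≫ d' = cpow x n := cpow_ext hk' n (le_max_right _ _)
  have hswap : ∀ m l, cpow x m ≫ cpow d l = cpow d l ≫ cpow x m := fun m l =>
    cpow_comm (cpow_comm hc.symm l).symm m
  have hswap' : ∀ m l, cpow x m ≫ cpow d' l = cpow d' l ≫ cpow x m := fun m l =>
    cpow_comm (cpow_comm hc'.symm l).symm m
  have hidem : (x ≫ d) ≫ (x ≫ d) = x ≫ d := by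
    simp only [Category.assoc, hdd]
  have hidem' : (x ≫ d') ≫ (x ≫ d') = x ≫ d' := by
    simp only [Category.assoc, hdd']
  have claim1 : d = (x ≫ d) ≫ d' := by
    calc d = d ≫ cpow (x ≫ d) n := (cpow_absorb_right hdd n).symm
    _ = d ≫ cpow x n ≫ cpow d n := by rw [cpow_mul hc n]
    _ = d ≫ cpow d n ≫ cpow x n := by rw [hswap n n]
    _ = d ≫ cpow d n ≫ cpow x (n+1) ≫ d' := by rw [hxn']
    _ = (d ≫ cpow d n) ≫ cpow x (n+1) ≫ d' := by rw [Category.assoc]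
    _ = cpow d (n+1) ≫ cpow x (n+1) ≫ d' := by rw [← cpow_succ']
    _ = (cpow d (n+1) ≫ cpow x (n+1)) ≫ d' := by rw [Category.assoc]
    _ = (cpow x (n+1) ≫ cpow d (n+1)) ≫ d' := by rw [hswap (n+1) (n+1)]
    _ = cpow (x ≫ d) (n+1) ≫ d' := by rw [cpow_mul hc (n+1)]
    _ = (x ≫ d) ≫ d' := by rw [cpow_idem hidem n]
  have claim2 : d' = d ≫ x ≫ d' := by
    have habs : cpow (x ≫ d') n ≫ d' = d' := by
      rw [hc']; exact cpow_absorb_left hdd' n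
    have hdx : d ≫ cpow x (n+1) = cpow x n := by
      rw [← cpow_comm hc (n+1), hxn]
    calc d' = cpow (x ≫ d') n ≫ d' := habs.symm
    _ = (cpow x n ≫ cpow d' n) ≫ d' := by rw [cpow_mul hc' n]
    _ = cpow x n ≫ cpow d' (n+1) := by rw [Category.assoc, ← cpow_succ]
    _ = (d ≫ cpow x (n+1)) ≫ cpow d' (n+1) := by rw [hdx]
    _ = d ≫ cpow x (n+1) ≫ cpow d' (n+1) := by rw [Category.assoc]
    _ = d ≫ cpow (x ≫ d') (n+1) := by rw [cpow_mul hc' (n+1)]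
    _ = d ≫ x ≫ d' := by rw [cpow_idem hidem' n]
  rw [claim1, hc, Category.assoc, ← claim2]

lemma dag_cpow (D : Dagger C) {x : A ⟶ A} (hx : D.dag x = x) :
    ∀ n, D.dag (cpow x n) = cpow x n
  | 0 => by rw [cpow_zero, D.dag_id]
  | n+1 => by
      rw [cpow_succ, D.dag_comp, hx, dag_cpow D hx n, ← cpow_succ']
      rfl

lemma drazin_dag (D : Dagger C) {x d : A ⟶ A} (hx : D.dag x = x)
    (h : IsDrazinInv x d) : IsDrazinInv x (D.dag d) := by
  obtain ⟨⟨k, hk⟩, hdd, hc⟩ := h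
  have hcd : x ≫ D.dag d = D.dag d ≫ x := by
    have := congrArg D.dag hc
    rw [D.dag_comp, D.dag_comp, hx] at this
    exact this.symm
  refine ⟨⟨k, ?_⟩, ?_, hcd⟩
  · have := congrArg D.dag hk
    rw [D.dag_comp, dag_cpow D hx, dag_cpow D hx] at this
    rw [cpow_comm hcd (k+1)]
    exact this
  · have := congrArg D.dag hdd
    rw [D.dag_comp, D.dag_comp, hx, Category.assoc] at this
    exact this
end

/-- A Drazin inverse of `f ≫ f†` (resp. `f† ≫ f`) yields the †-Drazin inverse of `f` as
`f† ≫ (f ≫ f†)ᴰ` (resp. `(f† ≫ f)ᴰ ≫ f†`). -/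
theorem dagDrazinInv_of_drazinInv {C : Type u} [Category.{v} C] (D : Dagger C)
    {A B : C} (f : A ⟶ B) :
    (∀ d : A ⟶ A, IsDrazinInv (f ≫ D.dag f) d → IsDagDrazinInv D f (D.dag f ≫ d)) ∧
    (∀ e : B ⟶ B, IsDrazinInv (D.dag f ≫ f) e → IsDagDrazinInv D f (e ≫ D.dag f)) := by
  constructor
  · intro d hd
    have hg : D.dag (f ≫ D.dag f) = f ≫ D.dag f := by rw [D.dag_comp, D.dag_dag]
    have hdagd : D.dag d = d := drazin_unique (drazin_dag D hg hd) hd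
    obtain ⟨⟨k, hk⟩, hdd, hc⟩ := hd
    refine ⟨⟨k+1, ?_, ?_⟩, ?_, ?_, ?_⟩
    · -- cpow g (k+1) ≫ f ≫ (f† ≫ d) = cpow g (k+1)
      calc cpow (f ≫ D.dag f) (k+1) ≫ f ≫ D.dag f ≫ d
          = cpow (f ≫ D.dag f) (k+1+1) ≫ d := by
            conv_rhs => rw [cpow_succ]
            simp only [Category.assoc]
      _ = cpow (f ≫ D.dag f) (k+1) := cpow_ext hk (k+1) (Nat.le_succ k)
    · -- (f† ≫ d) ≫ f ≫ cpow h (k+1) = cpow h (k+1)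
      have h1 : f ≫ cpow (D.dag f ≫ f) (k+1) = cpow (f ≫ D.dag f) (k+1) ≫ f :=
        cpow_shift f (D.dag f) (k+1)
      have h2 : d ≫ cpow (f ≫ D.dag f) (k+1) = cpow (f ≫ D.dag f) k := by
        rw [← cpow_comm hc (k+1), hk]
      have h3 : D.dag f ≫ cpow (f ≫ D.dag f) k = cpow (D.dag f ≫ f) k ≫ D.dag f :=
        cpow_shift (D.dag f) f k
      calc (D.dag f ≫ d) ≫ f ≫ cpow (D.dag f ≫ f) (k+1)
          = D.dag f ≫ d ≫ cpow (f ≫ D.dag f) (k+1) ≫ f := by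
            rw [h1]; simp only [Category.assoc]
      _ = D.dag f ≫ cpow (f ≫ D.dag f) k ≫ f := by
            rw [← Category.assoc d, h2]
      _ = (cpow (D.dag f ≫ f) k ≫ D.dag f) ≫ f := by
            rw [← Category.assoc, h3]
      _ = cpow (D.dag f ≫ f) (k+1) := by rw [cpow_succ]; simp only [Category.assoc]
    · -- [D†.2]
      calc (D.dag f ≫ d) ≫ f ≫ D.dag f ≫ d
          = D.dag f ≫ (d ≫ (f ≫ D.dag f) ≫ d) := by simp only [Category.assoc]
      _ = D.dag f ≫ d := by rw [hdd]
    · -- [D†.3]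
      rw [D.dag_comp, D.dag_comp, D.dag_dag, hdagd]
      calc (d ≫ f) ≫ D.dag f = d ≫ (f ≫ D.dag f) := by simp only [Category.assoc]
      _ = (f ≫ D.dag f) ≫ d := hc.symm
      _ = f ≫ D.dag f ≫ d := by simp only [Category.assoc]
    · -- [D†.4]
      rw [D.dag_comp, D.dag_comp, D.dag_dag, hdagd]
      simp only [Category.assoc]
  · intro e he
    have hh : D.dag (D.dag f ≫ f) = D.dag f ≫ f := by rw [D.dag_comp, D.dag_dag]
    have hdage : D.dag e = e := drazin_unique (drazin_dag D hh he) he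
    obtain ⟨⟨k, hk⟩, hee, hc⟩ := he
    refine ⟨⟨k+1, ?_, ?_⟩, ?_, ?_, ?_⟩
    · -- cpow g (k+1) ≫ f ≫ (e ≫ f†) = cpow g (k+1)
      have h1 : cpow (f ≫ D.dag f) (k+1) ≫ f = f ≫ cpow (D.dag f ≫ f) (k+1) :=
        (cpow_shift f (D.dag f) (k+1)).symm
      have h2 : cpow (D.dag f ≫ f) (k+1) ≫ e = cpow (D.dag f ≫ f) k := hk
      have h3 : f ≫ cpow (D.dag f ≫ f) k = cpow (f ≫ D.dag f) k ≫ f :=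
        cpow_shift f (D.dag f) k
      calc cpow (f ≫ D.dag f) (k+1) ≫ f ≫ e ≫ D.dag f
          = f ≫ (cpow (D.dag f ≫ f) (k+1) ≫ e) ≫ D.dag f := by
            rw [← Category.assoc, h1]; simp only [Category.assoc]
      _ = (f ≫ cpow (D.dag f ≫ f) k) ≫ D.dag f := by rw [h2, Category.assoc]
      _ = cpow (f ≫ D.dag f) k ≫ f ≫ D.dag f := by rw [h3]; simp only [Category.assoc]
      _ = cpow (f ≫ D.dag f) (k+1) := (cpow_succ _ k).symm
    · -- (e ≫ f†) ≫ f ≫ cpow h (k+1) = cpow h (k+1)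
      calc (e ≫ D.dag f) ≫ f ≫ cpow (D.dag f ≫ f) (k+1)
          = e ≫ cpow (D.dag f ≫ f) (k+1+1) := by
            rw [cpow_succ' _ (k+1)]; simp only [Category.assoc]
      _ = cpow (D.dag f ≫ f) (k+1+1) ≫ e := (cpow_comm hc (k+2)).symm
      _ = cpow (D.dag f ≫ f) (k+1) := cpow_ext hk (k+1) (Nat.le_succ k)
    · -- [D†.2]
      calc (e ≫ D.dag f) ≫ f ≫ e ≫ D.dag f
          = (e ≫ (D.dag f ≫ f) ≫ e) ≫ D.dag f := by simp only [Category.assoc]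
      _ = e ≫ D.dag f := by rw [hee]
    · -- [D†.3]
      rw [← Category.assoc, D.dag_comp, D.dag_comp, D.dag_dag, hdage]
      simp only [Category.assoc]
    · -- [D†.4]
      rw [D.dag_comp, D.dag_comp, D.dag_dag, hdage, ← Category.assoc, hc]
      simp only [Category.assoc]
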